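/- For 0 < |q| < 1, 0 < |p| < 1 with p = q^{2k} for an odd nonzero integer k, and any positive integer m, the exchange function F(m,x) = ∏_{s=1}^{2m} q^{-1}·ϑ_{q⁴}(x²q²p^{-s})·ϑ_{q⁴}(x^{-2}q²p^{s}) / (ϑ_{q⁴}(x^{-2}p^{s})·ϑ_{q⁴}(x²p^{-s})) equals 1 for all x in its domain. -/

import Mathlib

open Complex Finset

/-- The q-Pochhammer infinite product `(x;a)_∞ = ∏_{n≥0} (1 - x aⁿ)`. -/
noncomputable def qPoch (x a : ℂ) : ℂ := ∏' n : ℕ, (1 - x * a ^ n)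

/-- The Jacobi theta function `ϑ_a(x) = (x;a)_∞ (a x⁻¹;a)_∞ (a;a)_∞`. -/
noncomputable def theta (a x : ℂ) : ℂ := qPoch x a * qPoch (a * x⁻¹) a * qPoch a a

/-- The exchange function `F(m,x)` of eq. (2.6a), for positive `m`. -/
noncomputable def Fexch (q p : ℂ) (m : ℕ) (x : ℂ) : ℂ :=
  ∏ s ∈ Finset.Icc 1 (2 * m),
    q⁻¹ * theta (q ^ 4) (x ^ 2 * q ^ 2 * p ^ (-(s : ℤ))) *
      theta (q ^ 4) (x⁻¹ ^ 2 * q ^ 2 * p ^ (s : ℤ)) /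
      (theta (q ^ 4) (x⁻¹ ^ 2 * p ^ (s : ℤ)) * theta (q ^ 4) (x ^ 2 * p ^ (-(s : ℤ))))

lemma multipliable_qPoch (x a : ℂ) (ha : ‖a‖ < 1) :
    Multipliable fun n : ℕ => 1 - x * a ^ n := by
  by_cases hz : ∃ n, 1 - x * a ^ n = 0
  · obtain ⟨n, hn⟩ := hz
    refine ⟨0, ?_⟩
    have h : ∀ᶠ s : Finset ℕ in Filter.atTop, ∏ j ∈ s, (1 - x * a ^ j) = 0 := by
      filter_upwards [Filter.eventually_ge_atTop ({n} : Finset ℕ)] with s hs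
      exact Finset.prod_eq_zero (hs (Finset.mem_singleton_self n)) hn
    exact Filter.Tendsto.congr' (by filter_upwards [h] with s hs using hs.symm) tendsto_const_nhds
  · push_neg at hz
    have h0 : Filter.Tendsto (fun n : ℕ => x * a ^ n) Filter.atTop (nhds 0) := by
      simpa using (tendsto_pow_atTop_nhds_zero_of_norm_lt_one (by simpa using ha)).const_mul x
    obtain ⟨N, hN⟩ : ∃ N, ∀ n ≥ N, ‖x * a ^ n‖ ≤ 1/2 := by
      have := h0.norm
      simp only [norm_zero] at this
      exact Filter.eventually_atTop.mp
        (this.eventually_le_const (show (0:ℝ) < 1/2 by norm_num))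
    have hsum : Summable fun n : ℕ => Complex.log (1 - x * a ^ n) := by
      rw [← summable_nat_add_iff N]
      refine Summable.of_norm_bounded (g := fun n => (3/2) * (‖x‖ * ‖a‖ ^ N * ‖a‖ ^ n)) ?_ ?_
      · apply Summable.mul_left
        exact (summable_geometric_of_lt_one (norm_nonneg a) (by simpa using ha)).mul_left _
      · intro n
        have hb : ‖x * a ^ (n + N)‖ ≤ 1/2 := hN _ (by omega)
        have hlog := Complex.norm_log_one_add_half_le_self
          (z := -(x * a ^ (n + N))) (by simpa using hb)
        calc ‖Complex.log (1 - x * a ^ (n + N))‖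
            = ‖Complex.log (1 + -(x * a ^ (n+N)))‖ := by ring_nf
          _ ≤ 3/2 * ‖-(x * a ^ (n+N))‖ := hlog
          _ ≤ 3/2 * (‖x‖ * ‖a‖ ^ N * ‖a‖ ^ n) := by
              apply le_of_eq
              rw [norm_neg, norm_mul, norm_pow, pow_add]; ring
    exact Complex.multipliable_of_summable_log hsum

lemma qPoch_shift (x a : ℂ) (ha : ‖a‖ < 1) :
    qPoch x a = (1 - x) * qPoch (x * a) a := by
  have h1 : (fun n : ℕ => 1 - x * a ^ (n + 1)) = fun n : ℕ => 1 - (x * a) * a ^ n := by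
    funext n; rw [pow_succ]; ring
  have hm : Multipliable fun n : ℕ => 1 - x * a ^ (n + 1) := by
    rw [h1]; exact multipliable_qPoch (x * a) a ha
  have h := tprod_eq_zero_mul' (f := fun n : ℕ => 1 - x * a ^ n) hm
  rw [qPoch, h]
  simp only [pow_zero, mul_one]
  congr 1
  rw [qPoch, h1]

lemma theta_inv (a y : ℂ) (ha0 : a ≠ 0) (hy : y ≠ 0) :
    theta a (a * y⁻¹) = theta a y := by
  have h : a * (a * y⁻¹)⁻¹ = y := by field_simp
  rw [theta, theta, h]
  ring

lemma theta_quasi (a y : ℂ) (ha : ‖a‖ < 1) (ha0 : a ≠ 0) (hy : y ≠ 0) :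
    theta a (a * y) = -y⁻¹ * theta a y := by
  have h : a * (a * y)⁻¹ = y⁻¹ := by field_simp
  rw [theta, theta, h]
  rw [qPoch_shift y⁻¹ a ha, qPoch_shift y a ha]
  have h1 : qPoch (a * y) a = qPoch (y * a) a := by rw [mul_comm]
  have h2 : qPoch (y⁻¹ * a) a = qPoch (a * y⁻¹) a := by rw [mul_comm]
  rw [h1, h2]
  have h3 : (1 - y⁻¹) = -y⁻¹ * (1 - y) := by field_simp; ring
  rw [h3]; ring

lemma theta_pow (a : ℂ) (ha : ‖a‖ < 1) (ha0 : a ≠ 0) (y : ℂ) (hy : y ≠ 0) (j : ℕ) :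
    theta a (a ^ j * y) =
      ((-1) ^ j * a ^ (∑ i ∈ Finset.range j, i) * y ^ j)⁻¹ * theta a y := by
  induction j with
  | zero => simp
  | succ j ih =>
    have hne : a ^ j * y ≠ 0 := mul_ne_zero (pow_ne_zero _ ha0) hy
    have step : theta a (a ^ (j+1) * y) = -(a ^ j * y)⁻¹ * theta a (a ^ j * y) := by
      rw [show a ^ (j+1) * y = a * (a ^ j * y) by ring]
      exact theta_quasi a _ ha ha0 hne
    rw [step, ih, Finset.sum_range_succ, ← mul_assoc]
    congr 1
    have h6 : ((-1:ℂ)) ^ j ≠ 0 := pow_ne_zero _ (by norm_num)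
    field_simp
    ring

lemma theta_q2w_inv (q w : ℂ) (ha : ‖q^4‖ < 1) (hq : q ≠ 0) (hw : w ≠ 0) :
    theta (q^4) ((q^2)⁻¹ * w) = -((q^2)⁻¹ * w) * theta (q^4) (q^2 * w) := by
  have ha0 : (q:ℂ)^4 ≠ 0 := pow_ne_zero _ hq
  have h1 : (q^2)⁻¹ * w = q^4 * (q^6 * w⁻¹)⁻¹ := by field_simp
  have h2 : theta (q^4) ((q^2)⁻¹ * w) = theta (q^4) (q^6 * w⁻¹) := by
    rw [h1]; exact theta_inv _ _ ha0 (mul_ne_zero (pow_ne_zero _ hq) (inv_ne_zero hw))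
  have h3 : (q:ℂ)^6 * w⁻¹ = q^4 * (q^2 * w⁻¹) := by ring
  have h4 : theta (q^4) (q^6 * w⁻¹) = -(q^2 * w⁻¹)⁻¹ * theta (q^4) (q^2 * w⁻¹) := by
    rw [h3]; exact theta_quasi _ _ ha ha0 (mul_ne_zero (pow_ne_zero _ hq) (inv_ne_zero hw))
  have h5 : (q:ℂ)^2 * w⁻¹ = q^4 * (q^2 * w)⁻¹ := by field_simp
  have h6 : theta (q^4) (q^2 * w⁻¹) = theta (q^4) (q^2 * w) := by
    rw [h5]; exact theta_inv _ _ ha0 (mul_ne_zero (pow_ne_zero _ hq) hw)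
  rw [h2, h4, h6]
  congr 1
  field_simp

set_option maxHeartbeats 1000000 in
lemma term_eq (q x : ℂ) (hq : q ≠ 0) (ha : ‖q ^ 4‖ < 1) (hx : x ≠ 0)
    (K : ℕ) (hK : Odd K) (s : ℕ)
    (hA : theta (q^4) (q^2 * x⁻¹^2) ≠ 0) (hB : theta (q^4) (x⁻¹^2) ≠ 0) :
    q⁻¹ * theta (q^4) (x ^ 2 * q ^ 2 * ((q^(2*K))^s)⁻¹) *
      theta (q^4) (x⁻¹ ^ 2 * q ^ 2 * (q^(2*K))^s) /
      (theta (q^4) (x⁻¹ ^ 2 * (q^(2*K))^s) * theta (q^4) (x ^ 2 * ((q^(2*K))^s)⁻¹)) =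
    if Even s then
      -q⁻¹ * x⁻¹^2 * (theta (q^4) (q^2 * x⁻¹^2))^2 / (theta (q^4) (x⁻¹^2))^2
    else
      (-q⁻¹ * x⁻¹^2 * (theta (q^4) (q^2 * x⁻¹^2))^2 / (theta (q^4) (x⁻¹^2))^2)⁻¹ := by
  have ha0 : (q:ℂ)^4 ≠ 0 := pow_ne_zero _ hq
  have hw : x⁻¹^2 ≠ 0 := pow_ne_zero _ (inv_ne_zero hx)
  have hP : ((q:ℂ)^(2*K))^s ≠ 0 := pow_ne_zero _ (pow_ne_zero _ hq)
  have sA : theta (q^4) (x ^ 2 * q ^ 2 * ((q^(2*K))^s)⁻¹)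
      = theta (q^4) (x⁻¹ ^ 2 * q ^ 2 * (q^(2*K))^s) := by
    have e : x ^ 2 * q ^ 2 * ((q^(2*K))^s)⁻¹
        = q^4 * (x⁻¹ ^ 2 * q ^ 2 * (q^(2*K))^s)⁻¹ := by
      field_simp
    rw [e]
    exact theta_inv _ _ ha0 (mul_ne_zero (mul_ne_zero hw (pow_ne_zero _ hq)) hP)
  have sB : theta (q^4) (x ^ 2 * ((q^(2*K))^s)⁻¹)
      = -(x⁻¹ ^ 2 * (q^(2*K))^s)⁻¹ * theta (q^4) (x⁻¹ ^ 2 * (q^(2*K))^s) := by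
    have e : x ^ 2 * ((q^(2*K))^s)⁻¹
        = q^4 * (q^4 * (x⁻¹ ^ 2 * (q^(2*K))^s))⁻¹ := by
      field_simp
    rw [e, theta_inv _ _ ha0 (mul_ne_zero ha0 (mul_ne_zero hw hP))]
    exact theta_quasi _ _ ha ha0 (mul_ne_zero hw hP)
  rw [sA, sB]
  obtain ⟨t, ht⟩ := hK
  rcases Nat.even_or_odd s with he | ho
  · obtain ⟨i, hi⟩ := he
    have eb : ((q:ℂ)^(2*K))^s = (q^4)^(K*i) := by
      rw [← pow_mul q (2*K) s, ← pow_mul q 4 (K*i)]; congr 1; subst hi; ring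
    have e3 : x⁻¹ ^ 2 * q ^ 2 * (q^(2*K))^s = (q^4)^(K*i) * (q^2 * x⁻¹^2) := by
      rw [eb]; ring
    have e4 : x⁻¹ ^ 2 * (q^(2*K))^s = (q^4)^(K*i) * (x⁻¹^2) := by
      rw [eb]; ring
    rw [e3, e4, theta_pow _ ha ha0 _ (mul_ne_zero (pow_ne_zero _ hq) hw) (K*i),
        theta_pow _ ha ha0 _ hw (K*i), if_pos ⟨i, hi⟩]
    rw [mul_pow (q^2) (x⁻¹^2) (K*i),
        show ((q:ℂ)^4)^(K*i) = ((q^2)^(K*i))^2 by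
          rw [← pow_mul q 4 (K*i), ← pow_mul q 2 (K*i), ← pow_mul q (2*(K*i)) 2]
          congr 1; ring]
    have hd : ((-1:ℂ))^(K*i) * (q^4)^(∑ i ∈ Finset.range (K*i), i) ≠ 0 :=
      mul_ne_zero (pow_ne_zero _ (by norm_num)) (pow_ne_zero _ ha0)
    have hz : ((q:ℂ)^2)^(K*i) ≠ 0 := pow_ne_zero _ (pow_ne_zero _ hq)
    have hv : (x⁻¹^2)^(K*i) ≠ 0 := pow_ne_zero _ hw
    generalize (-1:ℂ)^(K*i) * (q^4)^(∑ i ∈ Finset.range (K*i), i) = d at hd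
    generalize ((q:ℂ)^2)^(K*i) = z at hz
    generalize (x⁻¹^2:ℂ)^(K*i) = v at hv
    set A := theta (q^4) (q^2 * x⁻¹^2) with hA_def
    set B := theta (q^4) (x⁻¹^2) with hB_def
    simp only [inv_pow]
    field_simp
  · obtain ⟨i, hi⟩ := ho
    have eb : (q:ℂ)^2 * ((q:ℂ)^(2*K))^s = (q^4)^(K*i+t+1) := by
      rw [← pow_mul q (2*K) s, ← pow_add q 2 (2*K*s), ← pow_mul q 4 (K*i+t+1)]
      congr 1; subst hi; subst ht; ring
    have e3 : x⁻¹ ^ 2 * q ^ 2 * (q^(2*K))^s = (q^4)^(K*i+t+1) * (x⁻¹^2) := by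
      rw [← eb]; ring
    have e4 : x⁻¹ ^ 2 * (q^(2*K))^s = (q^4)^(K*i+t+1) * ((q^2)⁻¹ * x⁻¹^2) := by
      rw [← eb]; field_simp
    rw [e3, e4, theta_pow _ ha ha0 _ hw (K*i+t+1),
        theta_pow _ ha ha0 _ (mul_ne_zero (inv_ne_zero (pow_ne_zero _ hq)) hw) (K*i+t+1),
        theta_q2w_inv q _ ha hq hw,
        if_neg (by simp [hi, Nat.even_add_one, parity_simps])]
    rw [mul_pow ((q^2)⁻¹) (x⁻¹^2) (K*i+t+1), inv_pow (q^2) (K*i+t+1),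
        show ((q:ℂ)^4)^(K*i+t+1) = ((q^2)^(K*i+t+1))^2 by
          rw [← pow_mul q 4 (K*i+t+1), ← pow_mul q 2 (K*i+t+1), ← pow_mul q (2*(K*i+t+1)) 2]
          congr 1; ring]
    have hd : ((-1:ℂ))^(K*i+t+1) * (q^4)^(∑ i ∈ Finset.range (K*i+t+1), i) ≠ 0 :=
      mul_ne_zero (pow_ne_zero _ (by norm_num)) (pow_ne_zero _ ha0)
    have hz : ((q:ℂ)^2)^(K*i+t+1) ≠ 0 := pow_ne_zero _ (pow_ne_zero _ hq)
    have hv : (x⁻¹^2:ℂ)^(K*i+t+1) ≠ 0 := pow_ne_zero _ hw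
    generalize (-1:ℂ)^(K*i+t+1) * (q^4)^(∑ i ∈ Finset.range (K*i+t+1), i) = d at hd
    generalize ((q:ℂ)^2)^(K*i+t+1) = z at hz
    generalize (x⁻¹^2:ℂ)^(K*i+t+1) = v at hv
    set A := theta (q^4) (q^2 * x⁻¹^2) with hA_def
    set B := theta (q^4) (x⁻¹^2) with hB_def
    simp only [inv_pow]
    field_simp

theorem F_eq_one_of_k_odd (q p : ℂ) (hq0 : 0 < ‖q‖) (hq1 : ‖q‖ < 1)
    (hp0 : 0 < ‖p‖) (hp1 : ‖p‖ < 1)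
    (k : ℤ) (hk : k ≠ 0) (hkodd : Odd k) (hpq : p = q ^ (2 * k))
    (m : ℕ) (hm : 0 < m) (x : ℂ) (hx : x ≠ 0)
    (hden : ∀ s ∈ Finset.Icc 1 (2 * m),
      theta (q ^ 4) (x⁻¹ ^ 2 * p ^ (s : ℤ)) ≠ 0 ∧
      theta (q ^ 4) (x ^ 2 * p ^ (-(s : ℤ))) ≠ 0) :
    Fexch q p m x = 1 := by
  have hq : q ≠ 0 := by
    intro h; rw [h] at hq0; simp at hq0
  have ha : ‖q ^ 4‖ < 1 := by
    rw [norm_pow]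
    exact pow_lt_one₀ (norm_nonneg _) hq1 (by norm_num)
  have ha0 : (q:ℂ)^4 ≠ 0 := pow_ne_zero _ hq
  have hw : x⁻¹^2 ≠ 0 := pow_ne_zero _ (inv_ne_zero hx)
  -- k is positive
  have hk1 : 0 < k := by
    by_contra hneg
    push_neg at hneg
    have h2 : ‖p‖ = ‖q‖ ^ (2*k) := by rw [hpq, norm_zpow]
    have h5 : ‖q‖ ^ (-(2*k)) < 1 := by
      lift -(2*k) to ℕ using (by omega) with n hn
      rw [zpow_natCast]
      exact pow_lt_one₀ (norm_nonneg _) hq1 (by omega)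
    have hpos : (0:ℝ) < ‖q‖ ^ (-(2*k)) := zpow_pos hq0 _
    have h6 : 1 < (‖q‖ ^ (-(2*k)))⁻¹ := (one_lt_inv₀ hpos).mpr h5
    rw [← zpow_neg, neg_neg] at h6
    rw [h2] at hp1
    linarith
  set K : ℕ := k.toNat with hKdef
  have hKk : (K : ℤ) = k := Int.toNat_of_nonneg hk1.le
  have hKodd : Odd K := by
    rcases hkodd with ⟨n, hn⟩
    refine ⟨n.toNat, ?_⟩
    omega
  obtain ⟨t, ht⟩ := hKodd
  have hp' : p = q ^ (2*K) := by
    rw [hpq, show (2:ℤ) * k = ((2*K : ℕ) : ℤ) by omega, zpow_natCast]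
  have hps : ∀ s : ℕ, p ^ (s:ℤ) = (q^(2*K))^s := by
    intro s; rw [zpow_natCast, hp']
  have hpn : ∀ s : ℕ, p ^ (-(s:ℤ)) = ((q^(2*K))^s)⁻¹ := by
    intro s; rw [zpow_neg, hps]
  -- B ≠ 0
  have hB : theta (q^4) (x⁻¹^2) ≠ 0 := by
    have h2m : (2:ℕ) ∈ Finset.Icc 1 (2*m) := by simp; omega
    have hd := (hden 2 h2m).1
    rw [hps 2] at hd
    have e : x⁻¹^2 * (q^(2*K))^2 = (q^4)^K * (x⁻¹^2) := by
      rw [← pow_mul q (2*K) 2, ← pow_mul q 4 K, show 2*K*2 = 4*K by ring]; ring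
    rw [e, theta_pow _ ha ha0 _ hw K] at hd
    intro h0; exact hd (by rw [h0, mul_zero])
  -- A ≠ 0
  have hA : theta (q^4) (q^2 * x⁻¹^2) ≠ 0 := by
    have h1m : (1:ℕ) ∈ Finset.Icc 1 (2*m) := by simp; omega
    have hd := (hden 1 h1m).1
    rw [hps 1] at hd
    have e : x⁻¹^2 * (q^(2*K))^1 = (q^4)^(t+1) * ((q^2)⁻¹ * x⁻¹^2) := by
      rw [pow_one, ht, show (q:ℂ)^4 = q^4 by rfl]
      rw [show ((q:ℂ)^4)^(t+1) = q^2 * q^(2*(2*t+1)) by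
        rw [← pow_mul q 4 (t+1), ← pow_add q 2 (2*(2*t+1))]; congr 1; ring]
      field_simp
    rw [e, theta_pow _ ha ha0 _ (mul_ne_zero (inv_ne_zero (pow_ne_zero _ hq)) hw) (t+1),
        theta_q2w_inv q _ ha hq hw] at hd
    intro h0
    exact hd (by rw [h0]; ring)
  -- the key value u and its nonvanishing
  set u : ℂ := -q⁻¹ * x⁻¹^2 * (theta (q^4) (q^2 * x⁻¹^2))^2 / (theta (q^4) (x⁻¹^2))^2
    with hu_def
  have hu : u ≠ 0 := by
    apply div_ne_zero
    · apply mul_ne_zero (mul_ne_zero (neg_ne_zero.mpr (inv_ne_zero hq)) hw)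
      exact pow_ne_zero _ hA
    · exact pow_ne_zero _ hB
  -- rewrite each factor
  have hterm : ∀ s ∈ Finset.Icc 1 (2*m),
      q⁻¹ * theta (q ^ 4) (x ^ 2 * q ^ 2 * p ^ (-(s : ℤ))) *
        theta (q ^ 4) (x⁻¹ ^ 2 * q ^ 2 * p ^ (s : ℤ)) /
        (theta (q ^ 4) (x⁻¹ ^ 2 * p ^ (s : ℤ)) * theta (q ^ 4) (x ^ 2 * p ^ (-(s : ℤ))))
      = if Even s then u else u⁻¹ := by
    intro s _
    rw [hps s, hpn s]
    exact term_eq q x hq ha hx K ⟨t, ht⟩ s hA hB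
  rw [Fexch, Finset.prod_congr rfl hterm]
  -- the alternating product is 1
  have hprod : ∀ n : ℕ, ∏ s ∈ Finset.Icc 1 (2*n), (if Even s then u else u⁻¹) = 1 := by
    intro n
    induction n with
    | zero => simp
    | succ n ih =>
      have h1 : 2*(n+1) = (2*n+1)+1 := by ring
      rw [h1, Finset.prod_Icc_succ_top (by omega), Finset.prod_Icc_succ_top (by omega), ih]
      have he1 : ¬ Even (2*n+1) := by simp [Nat.even_add_one, parity_simps]
      have he2 : Even ((2*n+1)+1) := ⟨n+1, by ring⟩
      rw [if_neg he1, if_pos he2, one_mul, inv_mul_cancel₀ hu]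
  exact hprod m
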